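/- Let λ⁻ < 0 and λ₁⁺, …, λ_n⁺ > 0 be real numbers, and let A⁻, A₁⁺, …, A_n⁺ be nonnegative real numbers with A⁻ + ∑_{j=1}^n A_j⁺ = 1 and λ := A⁻ λ⁻ + ∑_{j=1}^n A_j⁺ λ_j⁺ < 0. Then there exist real numbers a_j ∈ [0,1] and b_j ≥ 0 (1 ≤ j ≤ n) such that: (1) (1 − a_j) λ⁻ + a_j λ_j⁺ < 0 for every 1 ≤ j ≤ n; (2) ∑_{j=1}^n b_j = 1; (3) A_j⁺ = b_j a_j for every 1 ≤ j ≤ n, and A⁻ = ∑_{j=1}^n b_j (1 − a_j). Consequently ∑_{j=1}^n b_j ((1 − a_j) λ⁻ + a_j λ_j⁺) = λ. -/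

import Mathlib

private lemma final_id (n : ℕ) (lamM : ℝ) (lamP AM' : ℝ) (AP a b : Fin n → ℝ)
    (lamPf : Fin n → ℝ)
    (h1 : ∀ j, AP j = b j * a j) (h2 : AM' = ∑ j, b j * (1 - a j)) :
    ∑ j, b j * ((1 - a j) * lamM + a j * lamPf j)
      = AM' * lamM + ∑ j, AP j * lamPf j := by
  calc ∑ j, b j * ((1 - a j) * lamM + a j * lamPf j)
      = ∑ j, (b j * (1 - a j) * lamM + b j * a j * lamPf j) :=
        Finset.sum_congr rfl (fun j _ => by ring)
    _ = (∑ j, b j * (1 - a j)) * lamM + ∑ j, b j * a j * lamPf j := by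
        rw [Finset.sum_add_distrib, Finset.sum_mul]
    _ = AM' * lamM + ∑ j, AP j * lamPf j := by
        rw [← h2]; congr 1
        exact Finset.sum_congr rfl (fun j _ => by rw [← h1])

/-- **Lemma A.3.** Given a negative number `λ⁻` and positive numbers `λⱼ⁺`, with nonnegative
weights `A⁻`, `Aⱼ⁺` summing to `1` and negative weighted average
`λ = A⁻ λ⁻ + ∑ Aⱼ⁺ λⱼ⁺ < 0`, there are `aⱼ ∈ [0,1]` and `bⱼ ≥ 0` such that each
`(1 - aⱼ) λ⁻ + aⱼ λⱼ⁺` is negative, `∑ bⱼ = 1`, `Aⱼ⁺ = bⱼ aⱼ` for every `j`,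
`A⁻ = ∑ bⱼ (1 - aⱼ)`, and consequently `∑ bⱼ ((1 - aⱼ) λ⁻ + aⱼ λⱼ⁺) = λ`. -/
theorem convex_sums_decomposition_one_negative
    (n : ℕ) (hn : 0 < n)
    (lamM : ℝ) (lamP : Fin n → ℝ)
    (hlamM : lamM < 0) (hlamP : ∀ j, 0 < lamP j)
    (AM : ℝ) (AP : Fin n → ℝ)
    (hAM : 0 ≤ AM) (hAP : ∀ j, 0 ≤ AP j)
    (hsum : AM + ∑ j, AP j = 1)
    (hneg : AM * lamM + ∑ j, AP j * lamP j < 0) :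
    ∃ a b : Fin n → ℝ,
      (∀ j, a j ∈ Set.Icc (0 : ℝ) 1) ∧
      (∀ j, 0 ≤ b j) ∧
      (∀ j, (1 - a j) * lamM + a j * lamP j < 0) ∧
      (∑ j, b j = 1) ∧
      (∀ j, AP j = b j * a j) ∧
      (AM = ∑ j, b j * (1 - a j)) ∧
      (∑ j, b j * ((1 - a j) * lamM + a j * lamP j)
        = AM * lamM + ∑ j, AP j * lamP j) := by
  set S : ℝ := ∑ j, AP j * lamP j with hSdef
  have hSnonneg : 0 ≤ S :=
    Finset.sum_nonneg fun j _ => mul_nonneg (hAP j) (hlamP j).le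
  rcases eq_or_lt_of_le hSnonneg with hS0 | hSpos
  · -- S = 0 : all AP j = 0, AM = 1
    have hterm : ∀ j ∈ Finset.univ, AP j * lamP j = 0 := by
      intro j _
      exact (Finset.sum_eq_zero_iff_of_nonneg
        (fun j _ => mul_nonneg (hAP j) (hlamP j).le)).mp hS0.symm j (Finset.mem_univ j)
    have hAP0 : ∀ j, AP j = 0 := by
      intro j
      have := hterm j (Finset.mem_univ j)
      rcases mul_eq_zero.mp this with h | h
      · exact h
      · exfalso; linarith [hlamP j]
    have hAM1 : AM = 1 := by
      have : (∑ j, AP j) = 0 := Finset.sum_eq_zero fun j _ => hAP0 j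
      linarith
    refine ⟨fun _ => 0, fun j => if j = ⟨0, hn⟩ then 1 else 0, ?_, ?_, ?_, ?_, ?_, ?_, ?_⟩
    · intro j; exact ⟨le_refl 0, zero_le_one⟩
    · intro j; dsimp only; split <;> norm_num
    · intro j; simpa using hlamM
    · simp
    · intro j; simp [hAP0 j]
    · simp [hAM1]
    · exact final_id n lamM 0 AM AP (fun _ => 0) _ lamP (fun j => by simp [hAP0 j])
        (by simp [hAM1])
  · -- S > 0
    have hAMpos : 0 < AM := by
      rcases eq_or_lt_of_le hAM with h | h
      · exfalso; rw [← h] at hneg; simp at hneg; linarith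
      · exact h
    set c : Fin n → ℝ := fun j => AP j * lamP j / S with hc
    set b : Fin n → ℝ := fun j => AP j + c j * AM with hb
    have hcnonneg : ∀ j, 0 ≤ c j := fun j =>
      div_nonneg (mul_nonneg (hAP j) (hlamP j).le) hSnonneg
    have hbnonneg : ∀ j, 0 ≤ b j := fun j =>
      add_nonneg (hAP j) (mul_nonneg (hcnonneg j) hAM)
    have hbzero : ∀ j, b j = 0 → AP j = 0 ∧ c j = 0 := by
      intro j h
      have h1 : AP j = 0 ∧ c j * AM = 0 :=
        (add_eq_zero_iff_of_nonneg (hAP j) (mul_nonneg (hcnonneg j) hAM)).mp h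
      refine ⟨h1.1, ?_⟩
      rcases mul_eq_zero.mp h1.2 with h2 | h2
      · exact h2
      · linarith [hAMpos]
    set a : Fin n → ℝ := fun j => if b j = 0 then 0 else AP j / b j with ha
    have hba : ∀ j, AP j = b j * a j := by
      intro j
      by_cases h : b j = 0
      · simp [ha, h, (hbzero j h).1]
      · rw [show a j = AP j / b j from if_neg h]; field_simp
    have hsumc : ∑ j, c j = 1 := by
      rw [hc]
      rw [← Finset.sum_div]
      exact div_self (ne_of_gt hSpos)
    have hsumb : ∑ j, b j = 1 := by
      simp only [hb]
      rw [Finset.sum_add_distrib, ← Finset.sum_mul, hsumc]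
      linarith
    have hAMeq : AM = ∑ j, b j * (1 - a j) := by
      have : ∀ j, b j * (1 - a j) = b j - AP j := by
        intro j; rw [hba j]; ring
      rw [Finset.sum_congr rfl fun j _ => this j, Finset.sum_sub_distrib, hsumb]
      linarith [hsum]
    refine ⟨a, b, ?_, hbnonneg, ?_, hsumb, hba, hAMeq, final_id n lamM 0 AM AP a b lamP hba hAMeq⟩
    · intro j
      by_cases h : b j = 0
      · simp [ha, h]
      · have hbpos : 0 < b j := lt_of_le_of_ne (hbnonneg j) (Ne.symm h)
        constructor
        · simp only [ha, if_neg h]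
          exact div_nonneg (hAP j) hbpos.le
        · simp only [ha, if_neg h]
          rw [div_le_one hbpos]
          have := mul_nonneg (hcnonneg j) hAM
          simp only [hb]; linarith
    · intro j
      by_cases h : b j = 0
      · simp only [ha, if_pos h]; simpa using hlamM
      · have hbpos : 0 < b j := lt_of_le_of_ne (hbnonneg j) (Ne.symm h)
        have hAPpos : 0 < AP j := by
          rcases eq_or_lt_of_le (hAP j) with h1 | h1
          · exfalso
            have hc0 : c j = 0 := by simp [hc, ← h1]
            have : b j = 0 := by simp [hb, hc0, ← h1]
            exact h this
          · exact h1
        have e1 : a j = AP j / b j := if_neg h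
        have e2 : b j - AP j = AP j * lamP j / S * AM := by simp [hb, hc]
        have key : ((1 - a j) * lamM + a j * lamP j) * b j
            = (AP j * lamP j / S) * (AM * lamM + S) := by
          have k1 : ((1 - a j) * lamM + a j * lamP j) * b j
              = (b j - AP j) * lamM + AP j * lamP j := by
            rw [e1]; field_simp
          rw [k1, e2]; field_simp
        have hrhs : (AP j * lamP j / S) * (AM * lamM + S) < 0 :=
          mul_neg_of_pos_of_neg
            (div_pos (mul_pos hAPpos (hlamP j)) hSpos) (by rw [hSdef] at hneg ⊢; exact hneg)
        by_contra hcon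
        push_neg at hcon
        have h0 : 0 ≤ ((1 - a j) * lamM + a j * lamP j) * b j :=
          mul_nonneg hcon hbpos.le
        rw [key] at h0
        linarith
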